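/- Let D be an (f,g)-bounded orientation of G=(V,E). Then D is decreasingly minimal among (f,g)-bounded orientations of G if and only if there is no directed path in D from a node s with ρ_D(s) < g(s) to a node t with ρ_D(t) > f(t) such that ρ_D(t) ≥ ρ_D(s) + 2. -/

import Mathlib

open Finset

/-- Head of edge `e` under orientation `o` (an orientation picks, for each edge,
one of its two end-nodes as head). -/
def ohead {V E : Type*} (ends : E → V × V) (o : E → Bool) (e : E) : V :=
  if o e then (ends e).1 else (ends e).2

/-- Tail of edge `e` under orientation `o`. -/
def otail {V E : Type*} (ends : E → V × V) (o : E → Bool) (e : E) : V :=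
  if o e then (ends e).2 else (ends e).1

/-- In-degree of node `v` in the orientation `o` of the graph. -/
def indeg {V E : Type*} [Fintype E] [DecidableEq V] (ends : E → V × V) (o : E → Bool)
    (v : V) : ℕ :=
  (Finset.univ.filter fun e => ohead ends o e = v).card

/-- `e_G(X)`: number of edges with at least one end-node in `X`. -/
def eG {V E : Type*} [Fintype E] [DecidableEq V] (ends : E → V × V) (X : Finset V) : ℕ :=
  (Finset.univ.filter fun e => (ends e).1 ∈ X ∨ (ends e).2 ∈ X).card

/-- `i_G(X)`: number of edges induced by `X` (both end-nodes in `X`). -/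
def iG {V E : Type*} [Fintype E] [DecidableEq V] (ends : E → V × V) (X : Finset V) : ℕ :=
  (Finset.univ.filter fun e => (ends e).1 ∈ X ∧ (ends e).2 ∈ X).card

/-- `ρ_D(X)`: number of arcs entering `X` (head in `X`, tail outside). -/
def inCut {V E : Type*} [Fintype E] [DecidableEq V] (ends : E → V × V) (o : E → Bool)
    (X : Finset V) : ℕ :=
  (Finset.univ.filter fun e => ohead ends o e ∈ X ∧ otail ends o e ∉ X).card

/-- `d_G(X)`: number of edges with exactly one end-node in `X`. -/
def dG {V E : Type*} [Fintype E] [DecidableEq V] (ends : E → V × V) (X : Finset V) : ℕ :=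
  (Finset.univ.filter fun e =>
    ((ends e).1 ∈ X ∧ (ends e).2 ∉ X) ∨ ((ends e).2 ∈ X ∧ (ends e).1 ∉ X)).card

/-- `Reach ends o s t`: there is a directed path from `s` to `t` in the orientation `o`. -/
def Reach {V E : Type*} (ends : E → V × V) (o : E → Bool) : V → V → Prop :=
  Relation.ReflTransGen fun u v => ∃ e, otail ends o e = u ∧ ohead ends o e = v

/-- `IsDipath ends o s t P`: the list of edges `P` forms a directed walk from `s` to `t`. -/
def IsDipath {V E : Type*} (ends : E → V × V) (o : E → Bool) : V → V → List E → Prop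
  | s, t, [] => s = t
  | s, t, e :: P => otail ends o e = s ∧ IsDipath ends o (ohead ends o e) t P

/-- The components of `m` sorted in decreasing order. -/
def decSeq {V : Type*} [Fintype V] (m : V → ℕ) : List ℕ :=
  (Multiset.sort (Finset.univ.val.map m) (· ≤ ·)).reverse

/-- The components of `m` sorted in increasing order. -/
def incSeq {V : Type*} [Fintype V] (m : V → ℕ) : List ℕ :=
  Multiset.sort (Finset.univ.val.map m) (· ≤ ·)

/-- Embedding of a natural number in-degree into `ℤ ∪ {−∞, +∞}`. -/
def zE (n : ℕ) : WithBot (WithTop ℤ) := (((n : ℤ) : WithTop ℤ) : WithBot (WithTop ℤ))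

/-- An orientation is `(f,g)`-bounded if `f(v) ≤ ρ(v) ≤ g(v)` for every node `v`
(where `f`, `g` may take the values `−∞`, `+∞`). -/
def Bounded {V E : Type*} [Fintype E] [DecidableEq V]
    (ends : E → V × V) (f g : V → WithBot (WithTop ℤ)) (o : E → Bool) : Prop :=
  ∀ v, f v ≤ zE (indeg ends o v) ∧ zE (indeg ends o v) ≤ g v

namespace DM

/-! ### Lemmas about `zE` -/

lemma zE_le_zE {a b : ℕ} (h : a ≤ b) : zE a ≤ zE b := by
  simp only [zE]
  exact_mod_cast h

lemma zE_lt_zE {a b : ℕ} (h : a < b) : zE a < zE b := by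
  simp only [zE]
  exact_mod_cast h

lemma lt_succ_le {c : WithBot (WithTop ℤ)} {n : ℕ} (h : zE n < c) : zE (n + 1) ≤ c := by
  induction c using WithBot.recBotCoe with
  | bot => exact absurd h (by simp)
  | coe x =>
    induction x using WithTop.recTopCoe with
    | top =>
      show zE (n+1) ≤ ((⊤ : WithTop ℤ) : WithBot (WithTop ℤ))
      simp only [zE]
      exact WithBot.coe_le_coe.2 le_top
    | coe k =>
      have h' : ((n : ℤ) : WithTop ℤ) < (k : WithTop ℤ) := by
        simpa [zE, WithBot.coe_lt_coe] using h
      have : (n : ℤ) < k := by exact_mod_cast h'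
      simp only [zE]
      have : ((n : ℤ) + 1) ≤ k := this
      exact_mod_cast this

lemma lt_pred_le {c : WithBot (WithTop ℤ)} {n : ℕ} (h : c < zE n) : c ≤ zE (n - 1) := by
  induction c using WithBot.recBotCoe with
  | bot => exact bot_le
  | coe x =>
    induction x using WithTop.recTopCoe with
    | top => exact absurd h (by simp [zE])
    | coe k =>
      have h' : (k : WithTop ℤ) < ((n : ℤ) : WithTop ℤ) := by
        simpa [zE, WithBot.coe_lt_coe] using h
      have hk : k < (n : ℤ) := by exact_mod_cast h'
      have hk' : k ≤ ((n - 1 : ℕ) : ℤ) := by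
        rcases Nat.eq_zero_or_pos n with h0 | h0
        · subst h0; simpa using hk.le.trans (by norm_num)
        · have : ((n - 1 : ℕ) : ℤ) = (n : ℤ) - 1 := by omega
          omega
      simp only [zE]
      exact_mod_cast hk'

/-! ### Power sums and lexicographic order -/

/-- power sum of a list -/
def SP (N : ℕ) (l : List ℕ) : ℕ := (l.map (N ^ ·)).sum

lemma sum_le_of_sorted {N : ℕ} (hN : 1 ≤ N) :
    ∀ (a : ℕ) (l : List ℕ), List.Pairwise (· ≥ ·) (a :: l) →
      SP N (a :: l) ≤ (l.length + 1) * N ^ a := by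
  intro a l h
  have hmem : ∀ x ∈ l, x ≤ a := fun _ hx => List.rel_of_pairwise_cons h hx
  simp only [SP, List.map_cons, List.sum_cons]
  have hsum : (l.map (N ^ ·)).sum ≤ l.length * N ^ a := by
    calc (l.map (N ^ ·)).sum ≤ (l.map (fun _ => N ^ a)).sum := by
          apply List.sum_le_sum
          intro i hi
          exact Nat.pow_le_pow_right hN (hmem i hi)
      _ = l.length * N ^ a := by
          simp [List.map_const']
  have : (l.length + 1) * N ^ a = N ^ a + l.length * N ^ a := by ring
  rw [this]
  exact Nat.add_le_add_left hsum _

/-- key: lex-lt implies power-sum lt, for sorted decreasing lists of equal length < N -/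
lemma lex_lt_sum_lt {N : ℕ} :
    ∀ {l l' : List ℕ}, List.Lex (· < ·) l l' →
      List.Pairwise (· ≥ ·) l → List.Pairwise (· ≥ ·) l' →
      l.length = l'.length → l.length < N → SP N l < SP N l' := by
  intro l l' h
  induction h with
  | nil => intro _ _ hlen _; simp at hlen
  | @cons a l₁ l₂ h ih =>
    intro h1 h2 hlen hN
    have := ih h1.of_cons h2.of_cons (by simpa using hlen) (by simp at hN ⊢; omega)
    simp only [SP, List.map_cons, List.sum_cons] at *
    omega
  | @rel a₁ l₁ a₂ l₂ hab =>
    intro h1 h2 hlen hN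
    have hNpos : 0 < N := by omega
    have h1' : SP N (a₁ :: l₁) ≤ (l₁.length + 1) * N ^ a₁ :=
      sum_le_of_sorted hNpos a₁ l₁ h1
    have h2' : N ^ a₂ ≤ SP N (a₂ :: l₂) := by
      simp [SP]
    calc SP N (a₁ :: l₁) ≤ (l₁.length + 1) * N ^ a₁ := h1'
      _ < N * N ^ a₁ := by
          have hlt : l₁.length + 1 < N := by simp at hN; omega
          have hp : 0 < N ^ a₁ := Nat.pow_pos hNpos
          exact (Nat.mul_lt_mul_right hp).2 hlt
      _ = N ^ (a₁ + 1) := by ring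
      _ ≤ N ^ a₂ := Nat.pow_le_pow_right hNpos hab
      _ ≤ SP N (a₂ :: l₂) := h2'

section decseq
variable {V : Type*} [Fintype V]

lemma decSeq_sorted (m : V → ℕ) : List.Pairwise (· ≥ ·) (decSeq m) := by
  have h := Multiset.pairwise_sort (Finset.univ.val.map m) (· ≤ ·)
  simpa [decSeq, List.Pairwise, List.pairwise_reverse] using h

lemma decSeq_length (m : V → ℕ) : (decSeq m).length = Fintype.card V := by
  simp [decSeq, Multiset.length_sort, Finset.card_univ]

lemma decSeq_coe (m : V → ℕ) : ((decSeq m : List ℕ) : Multiset ℕ) = Finset.univ.val.map m := by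
  simp [decSeq, Multiset.coe_reverse, Multiset.sort_eq]

lemma Phi_eq (N : ℕ) (m : V → ℕ) : (∑ v, N ^ m v) = SP N (decSeq m) := by
  have h1 : (∑ v, N ^ m v) = ((Finset.univ.val.map m).map (N ^ ·)).sum := by
    rw [Finset.sum, Multiset.map_map]; rfl
  rw [h1, ← decSeq_coe m]
  simp [SP]

lemma decSeq_le_iff (m m' : V → ℕ) {N : ℕ} (hN : Fintype.card V < N) :
    decSeq m ≤ decSeq m' ↔ (∑ v, N ^ m v) ≤ ∑ v, N ^ m' v := by
  have key : ∀ x y : V → ℕ, decSeq x < decSeq y → (∑ v, N ^ x v) < ∑ v, N ^ y v := by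
    intro x y h
    rw [Phi_eq N x, Phi_eq N y]
    exact lex_lt_sum_lt h (decSeq_sorted x) (decSeq_sorted y)
      (by rw [decSeq_length, decSeq_length]) (by rw [decSeq_length]; exact hN)
  constructor
  · intro h
    rcases lt_trichotomy (decSeq m) (decSeq m') with hlt | heq | hgt
    · exact (key _ _ hlt).le
    · rw [Phi_eq N m, Phi_eq N m', heq]
    · exact absurd (h.trans_lt hgt) (lt_irrefl _)
  · intro h
    by_contra hc
    exact absurd (key _ _ (not_le.1 hc)) (not_lt.2 h)

end decseq

/-! ### Paths and flips -/

section paths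
variable {V E : Type*}

open Classical in
/-- flip the orientation of the edges in `P` -/
noncomputable def flipL (P : List E) (o : E → Bool) : E → Bool :=
  fun e => if e ∈ P then !o e else o e

lemma flipL_mem {P : List E} {o : E → Bool} {e : E} (h : e ∈ P) : flipL P o e = !o e := by
  simp [flipL, h]

lemma flipL_not_mem {P : List E} {o : E → Bool} {e : E} (h : e ∉ P) : flipL P o e = o e := by
  simp [flipL, h]

lemma flipL_nil (o : E → Bool) : flipL ([] : List E) o = o :=
  funext fun e => flipL_not_mem (by simp)

lemma bool_neg {a b : Bool} (h : a ≠ b) : a = !b := by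
  cases a <;> cases b <;> simp_all

variable {ends : E → V × V} {o o' o₁ o₂ : E → Bool}

lemma ohead_neg {e : E} (h : o' e = !o e) : ohead ends o' e = otail ends o e := by
  simp only [ohead, otail, h]; cases o e <;> simp

lemma otail_neg {e : E} (h : o' e = !o e) : otail ends o' e = ohead ends o e := by
  simp only [ohead, otail, h]; cases o e <;> simp

lemma ohead_eq {e : E} (h : o' e = o e) : ohead ends o' e = ohead ends o e := by
  simp only [ohead, h]

lemma otail_eq {e : E} (h : o' e = o e) : otail ends o' e = otail ends o e := by
  simp only [otail, h]

lemma ohead_neg' {e : E} (h : o' e ≠ o e) : ohead ends o' e = otail ends o e := by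
  simp only [ohead, otail]
  cases h1 : o e <;> cases h2 : o' e <;> simp_all

lemma isDipath_append {s u t : V} :
    ∀ {P Q : List E}, IsDipath ends o s u P → IsDipath ends o u t Q →
      IsDipath ends o s t (P ++ Q) := by
  intro P
  induction P generalizing s with
  | nil => intro Q h1 h2; cases h1; simpa using h2
  | cons e P ih => intro Q h1 h2; exact ⟨h1.1, ih h1.2 h2⟩

lemma isDipath_transfer {s t : V} :
    ∀ {P : List E}, (∀ e ∈ P, o₂ e = o₁ e) → IsDipath ends o₁ s t P →
      IsDipath ends o₂ s t P := by
  intro P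
  induction P generalizing s with
  | nil => intro _ h; exact h
  | cons e P ih =>
    intro hh h
    refine ⟨(otail_eq (hh e (by simp))).trans h.1, ?_⟩
    rw [ohead_eq (hh e (by simp))]
    exact ih (fun e' he' => hh e' (by simp [he'])) h.2

lemma isDipath_reach {s t : V} :
    ∀ {P : List E}, IsDipath ends o s t P → Reach ends o s t := by
  intro P
  induction P generalizing s with
  | nil => intro h; cases h; exact Relation.ReflTransGen.refl
  | cons e P ih =>
    intro h
    exact Relation.ReflTransGen.head ⟨e, h.1, rfl⟩ (ih h.2)

lemma reach_isDipath {s t : V} (h : Reach ends o s t) :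
    ∃ P : List E, IsDipath ends o s t P := by
  induction h with
  | refl => exact ⟨[], rfl⟩
  | tail _ step ih =>
    rcases ih with ⟨P, hP⟩
    rcases step with ⟨e, he1, he2⟩
    exact ⟨P ++ [e], isDipath_append hP (show IsDipath ends o _ _ [e] from ⟨he1, he2⟩)⟩

lemma vertex_list {s t : V} :
    ∀ {P : List E}, IsDipath ends o s t P →
      P.map (otail ends o) ++ [t] = s :: P.map (ohead ends o) := by
  intro P
  induction P generalizing s with
  | nil => intro h; cases h; rfl
  | cons e P ih =>
    intro h
    simp only [List.map_cons, List.cons_append, h.1]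
    rw [ih h.2]

/-- from any vertex on a walk there is a walk to the end using a suffix -/
lemma suffix_walk {t : V} :
    ∀ (P : List E) (s : V), IsDipath ends o s t P → ∀ v ∈ s :: P.map (ohead ends o),
      ∃ R : List E, (v :: R.map (ohead ends o)) <:+ (s :: P.map (ohead ends o)) ∧
        IsDipath ends o v t R ∧ ∀ e ∈ R, e ∈ P := by
  intro P
  induction P with
  | nil =>
    intro s h v hv
    simp at hv
    subst hv
    exact ⟨[], List.suffix_refl _, h, by simp⟩
  | cons e P ih =>
    intro s h v hv
    rcases List.mem_cons.1 hv with rfl | hv'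
    · exact ⟨e :: P, List.suffix_refl _, h, fun _ he => he⟩
    · rcases ih (ohead ends o e) h.2 v (by simpa using hv') with ⟨R, hsuf, hR, hsub⟩
      refine ⟨R, ?_, hR, fun e' he' => by simp [hsub e' he']⟩
      simp only [List.map_cons]
      exact hsuf.trans (List.suffix_cons _ _)

/-- shorten a walk to one with no repeated vertices -/
lemma shortcut {t : V} :
    ∀ (P : List E) (s : V), IsDipath ends o s t P →
      ∃ Q : List E, IsDipath ends o s t Q ∧ (∀ e ∈ Q, e ∈ P) ∧
        (s :: Q.map (ohead ends o)).Nodup := by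
  intro P
  induction P with
  | nil =>
    intro s h
    exact ⟨[], h, by simp, by simp⟩
  | cons e P ih =>
    intro s h
    rcases ih (ohead ends o e) h.2 with ⟨Q', hQ', hsub, hnd⟩
    by_cases hs : s ∈ ohead ends o e :: Q'.map (ohead ends o)
    · rcases suffix_walk Q' (ohead ends o e) hQ' s hs with ⟨R, hsuf, hR, hsubR⟩
      exact ⟨R, hR, fun e' he' => by simp [hsub e' (hsubR e' he')],
        hsuf.sublist.nodup hnd⟩
    · exact ⟨e :: Q', ⟨h.1, hQ'⟩, fun e' he' => by
        rcases List.mem_cons.1 he' with rfl | h'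
        · simp
        · simp [hsub e' h'], by simp only [List.map_cons]; exact List.nodup_cons.2 ⟨hs, hnd⟩⟩

lemma isDipath_reverse {s t : V} :
    ∀ {P : List E}, IsDipath ends o s t P → (∀ e ∈ P, o' e = !o e) →
      IsDipath ends o' t s P.reverse := by
  intro P
  induction P generalizing s with
  | nil => intro h _; exact h.symm
  | cons e P ih =>
    intro h hf
    simp only [List.reverse_cons]
    refine isDipath_append (ih h.2 (fun e' he' => hf e' (by simp [he']))) ?_
    have h1 : o' e = !o e := hf e (by simp)
    exact ⟨(otail_neg h1), (ohead_neg h1).trans h.1⟩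

lemma rev_vertex {s t : V} {P : List E} (h : IsDipath ends o s t P)
    (hf : ∀ e ∈ P, o' e = !o e) :
    t :: P.reverse.map (ohead ends o') = (s :: P.map (ohead ends o)).reverse := by
  have h1 : P.reverse.map (ohead ends o') = (P.map (otail ends o)).reverse := by
    rw [List.map_reverse]
    congr 1
    exact List.map_congr_left (fun e he => ohead_neg (hf e he))
  rw [h1]
  have h2 := vertex_list h
  calc t :: (P.map (otail ends o)).reverse = (P.map (otail ends o) ++ [t]).reverse := by
        simp
    _ = (s :: P.map (ohead ends o)).reverse := by rw [h2]

variable [Fintype E] [DecidableEq V]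

lemma indeg_flip_single (e : E) (h : o' e = !o e) (hrest : ∀ e' ≠ e, o' e' = o e') (v : V) :
    indeg ends o' v + (if ohead ends o e = v then 1 else 0) =
      indeg ends o v + (if otail ends o e = v then 1 else 0) := by
  classical
  simp only [indeg, Finset.card_filter]
  rw [← Finset.add_sum_erase _ _ (Finset.mem_univ e),
      ← Finset.add_sum_erase _ (fun e' => if ohead ends o e' = v then 1 else 0) (Finset.mem_univ e)]
  have hsum : (∑ e' ∈ Finset.univ.erase e, if ohead ends o' e' = v then 1 else 0) =
      ∑ e' ∈ Finset.univ.erase e, if ohead ends o e' = v then 1 else 0 := by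
    refine Finset.sum_congr rfl (fun x hx => ?_)
    rw [ohead_eq (hrest x (Finset.ne_of_mem_erase hx))]
  rw [hsum, ohead_neg h]
  omega

lemma indeg_flipL {t : V} :
    ∀ (P : List E) (o : E → Bool) (s : V), IsDipath ends o s t P →
      (s :: P.map (ohead ends o)).Nodup → ∀ v,
      indeg ends (flipL P o) v + (if t = v then 1 else 0) =
        indeg ends o v + (if s = v then 1 else 0) := by
  intro P
  induction P with
  | nil =>
    intro o s h _ v
    cases h
    rw [flipL_nil]
  | cons e P ih =>
    intro o s h hnd v
    have heP : e ∉ P := by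
      intro hc
      have : ohead ends o e ∈ P.map (ohead ends o) := List.mem_map_of_mem hc
      simp only [List.map_cons, List.nodup_cons] at hnd
      exact hnd.2.1 this
    set o₃ := flipL [e] o with ho₃
    have h1 : o₃ e = !o e := flipL_mem (by simp)
    have hrest : ∀ e' ≠ e, o₃ e' = o e' := fun e' he' => flipL_not_mem (by simp [he'])
    have hfun : flipL (e :: P) o = flipL P o₃ := by
      funext e'
      by_cases hc : e' ∈ P
      · rw [flipL_mem hc, flipL_mem (List.mem_cons_of_mem _ hc),
          hrest e' (fun hc' => heP (hc' ▸ hc))]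
      · by_cases hc' : e' = e
        · subst hc'
          rw [flipL_mem (by simp), flipL_not_mem hc, h1]
        · rw [flipL_not_mem hc, flipL_not_mem (by simp [hc', hc]), hrest e' hc']
    have hP₁ : IsDipath ends o₃ (ohead ends o e) t P :=
      isDipath_transfer (fun e' he' => hrest e' (fun hc => heP (hc ▸ he'))) h.2
    have hmap : P.map (ohead ends o₃) = P.map (ohead ends o) :=
      List.map_congr_left (fun e' he' => ohead_eq (hrest e' (fun hc => heP (hc ▸ he'))))
    have hnd₁ : (ohead ends o e :: P.map (ohead ends o₃)).Nodup := by
      rw [hmap]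
      simp only [List.map_cons, List.nodup_cons] at hnd
      exact List.nodup_cons.2 ⟨hnd.2.1, hnd.2.2⟩
    have hIH := ih o₃ (ohead ends o e) hP₁ hnd₁ v
    rw [hfun, hIH]
    have hsingle := indeg_flip_single (ends := ends) e h1 hrest v
    rw [hsingle, h.1]

/-! ### Counting lemmas -/

lemma indeg_decomp (v : V) :
    indeg ends o' v + (Finset.univ.filter fun e => o' e ≠ o e ∧ ohead ends o e = v).card =
      indeg ends o v + (Finset.univ.filter fun e => o' e ≠ o e ∧ otail ends o e = v).card := by
  simp only [indeg, Finset.card_filter, ← Finset.sum_add_distrib]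
  refine Finset.sum_congr rfl (fun e _ => ?_)
  by_cases h : o' e = o e
  · rw [ohead_eq h]
    simp [h]
  · rw [ohead_neg' h]
    simp only [h, not_false_iff, true_and, ne_eq, not_false_eq_true]
    omega

lemma sum_indeg [Fintype V] : (∑ v, indeg ends o v) = Fintype.card E := by
  classical
  rw [Fintype.card, Finset.card_eq_sum_card_fiberwise
    (f := ohead ends o) (t := Finset.univ) (fun x _ => Finset.mem_univ _)]
  rfl

lemma reach_excess [Fintype V] (F : E → Prop) [DecidablePred F] (s : V)
    (hs : (Finset.univ.filter fun e => F e ∧ ohead ends o e = s).card <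
      (Finset.univ.filter fun e => F e ∧ otail ends o e = s).card) :
    ∃ t, (∃ P, IsDipath ends o s t P ∧ ∀ e ∈ P, F e) ∧
      (Finset.univ.filter fun e => F e ∧ otail ends o e = t).card <
        (Finset.univ.filter fun e => F e ∧ ohead ends o e = t).card := by
  classical
  set R : Finset V := Finset.univ.filter (fun v => ∃ P, IsDipath ends o s v P ∧ ∀ e ∈ P, F e)
    with hR
  have hsR : s ∈ R := by
    simp only [hR, Finset.mem_filter, Finset.mem_univ, true_and]
    exact ⟨[], rfl, by simp⟩
  have closure : ∀ e, F e → otail ends o e ∈ R → ohead ends o e ∈ R := by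
    intro e hF hin
    simp only [hR, Finset.mem_filter, Finset.mem_univ, true_and] at hin ⊢
    rcases hin with ⟨P, hP, hPF⟩
    refine ⟨P ++ [e], ?_, ?_⟩
    · exact isDipath_append hP (show IsDipath ends o _ _ [e] from ⟨rfl, rfl⟩)
    · intro e' he'
      rcases List.mem_append.1 he' with h | h
      · exact hPF e' h
      · simp at h; subst h; exact hF
  have count : ∀ (fn : E → V),
      (Finset.univ.filter fun e => F e ∧ fn e ∈ R).card =
        ∑ v ∈ R, (Finset.univ.filter fun e => F e ∧ fn e = v).card := by
    intro fn
    rw [Finset.card_eq_sum_card_fiberwise (f := fn) (t := R)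
      (fun x hx => (Finset.mem_filter.1 hx).2.2)]
    refine Finset.sum_congr rfl (fun v hv => ?_)
    congr 1
    rw [Finset.filter_filter]
    refine Finset.filter_congr (fun e _ => ?_)
    constructor
    · rintro ⟨⟨h1, _⟩, h2⟩; exact ⟨h1, h2⟩
    · rintro ⟨h1, h2⟩; exact ⟨⟨h1, h2 ▸ hv⟩, h2⟩
  by_contra hc
  push_neg at hc
  have hle : ∀ v ∈ R, (Finset.univ.filter fun e => F e ∧ ohead ends o e = v).card ≤
      (Finset.univ.filter fun e => F e ∧ otail ends o e = v).card := by
    intro v hv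
    simp only [hR, Finset.mem_filter, Finset.mem_univ, true_and] at hv
    exact hc v hv
  have hsub : (Finset.univ.filter fun e => F e ∧ otail ends o e ∈ R) ⊆
      (Finset.univ.filter fun e => F e ∧ ohead ends o e ∈ R) := by
    intro e he
    simp only [Finset.mem_filter, Finset.mem_univ, true_and] at he ⊢
    exact ⟨he.1, closure e he.1 he.2⟩
  have h1 : ∑ v ∈ R, (Finset.univ.filter fun e => F e ∧ otail ends o e = v).card ≤
      ∑ v ∈ R, (Finset.univ.filter fun e => F e ∧ ohead ends o e = v).card := by
    rw [← count, ← count]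
    exact Finset.card_le_card hsub
  have h2 : ∑ v ∈ R, (Finset.univ.filter fun e => F e ∧ ohead ends o e = v).card <
      ∑ v ∈ R, (Finset.univ.filter fun e => F e ∧ otail ends o e = v).card :=
    Finset.sum_lt_sum hle ⟨s, hsR, hs⟩
  omega

end paths

/-! ### Arithmetic helpers -/

lemma pow_step_le {N p q : ℕ} (hN : 1 ≤ N) (hpq : p ≤ q) :
    N ^ (p + 1) + N ^ q ≤ N ^ p + N ^ (q + 1) := by
  have h1 : N ^ p ≤ N ^ q := Nat.pow_le_pow_right hN hpq
  rw [pow_succ, pow_succ]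
  zify
  nlinarith [mul_nonneg (sub_nonneg.2 (show ((N:ℤ)^p : ℤ) ≤ (N:ℤ)^q by exact_mod_cast h1))
    (sub_nonneg.2 (show (1:ℤ) ≤ (N:ℤ) by exact_mod_cast hN))]

lemma pow_step_lt {N p q : ℕ} (hN : 2 ≤ N) (hpq : p < q) :
    N ^ (p + 1) + N ^ q < N ^ p + N ^ (q + 1) := by
  have h1 : N ^ p < N ^ q := Nat.pow_lt_pow_right (by omega) hpq
  rw [pow_succ, pow_succ]
  zify
  nlinarith [mul_pos (sub_pos.2 (show ((N:ℤ)^p : ℤ) < (N:ℤ)^q by exact_mod_cast h1))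
    (sub_pos.2 (show (1:ℤ) < (N:ℤ) by exact_mod_cast hN))]

section phi
variable {V : Type*} [Fintype V] [DecidableEq V]

lemma phi_le (N : ℕ) (x y : V → ℕ) (s t : V) (hst : s ≠ t)
    (ho : ∀ v, v ≠ s → v ≠ t → x v = y v)
    (hle : N ^ x s + N ^ x t ≤ N ^ y s + N ^ y t) :
    (∑ v, N ^ x v) ≤ ∑ v, N ^ y v := by
  have hts : t ∈ Finset.univ.erase s := Finset.mem_erase.2 ⟨Ne.symm hst, Finset.mem_univ _⟩
  rw [← Finset.add_sum_erase _ (fun v => N ^ x v) (Finset.mem_univ s),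
      ← Finset.add_sum_erase _ (fun v => N ^ y v) (Finset.mem_univ s),
      ← Finset.add_sum_erase _ (fun v => N ^ x v) hts,
      ← Finset.add_sum_erase _ (fun v => N ^ y v) hts]
  have hS : (∑ v ∈ (Finset.univ.erase s).erase t, N ^ x v) =
      ∑ v ∈ (Finset.univ.erase s).erase t, N ^ y v := by
    refine Finset.sum_congr rfl (fun v hv => ?_)
    rw [ho v (Finset.ne_of_mem_erase (Finset.mem_of_mem_erase hv)) (Finset.ne_of_mem_erase hv)]
  rw [hS]
  omega

lemma phi_lt (N : ℕ) (x y : V → ℕ) (s t : V) (hst : s ≠ t)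
    (ho : ∀ v, v ≠ s → v ≠ t → x v = y v)
    (hlt : N ^ x s + N ^ x t < N ^ y s + N ^ y t) :
    (∑ v, N ^ x v) < ∑ v, N ^ y v := by
  have hts : t ∈ Finset.univ.erase s := Finset.mem_erase.2 ⟨Ne.symm hst, Finset.mem_univ _⟩
  rw [← Finset.add_sum_erase _ (fun v => N ^ x v) (Finset.mem_univ s),
      ← Finset.add_sum_erase _ (fun v => N ^ y v) (Finset.mem_univ s),
      ← Finset.add_sum_erase _ (fun v => N ^ x v) hts,
      ← Finset.add_sum_erase _ (fun v => N ^ y v) hts]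
  have hS : (∑ v ∈ (Finset.univ.erase s).erase t, N ^ x v) =
      ∑ v ∈ (Finset.univ.erase s).erase t, N ^ y v := by
    refine Finset.sum_congr rfl (fun v hv => ?_)
    rw [ho v (Finset.ne_of_mem_erase (Finset.mem_of_mem_erase hv)) (Finset.ne_of_mem_erase hv)]
  rw [hS]
  omega

end phi

end DM

/-- An `(f,g)`-bounded orientation `D` of `G` is decreasingly minimal
among `(f,g)`-bounded orientations iff there is no directed path in `D` from a node `s`
with `ρ_D(s) < g(s)` to a node `t` with `ρ_D(t) > f(t)` such that `ρ_D(t) ≥ ρ_D(s) + 2`. -/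
theorem decmin_bounded_orientation_iff {V E : Type*} [Fintype V] [Fintype E] [DecidableEq V]
    (ends : E → V × V) (hloop : ∀ e, (ends e).1 ≠ (ends e).2)
    (f g : V → WithBot (WithTop ℤ)) (hfg : ∀ v, f v ≤ g v)
    (o : E → Bool) (ho : Bounded ends f g o) :
    (∀ o' : E → Bool, Bounded ends f g o' →
        decSeq (indeg ends o) ≤ decSeq (indeg ends o')) ↔
      ¬ ∃ s t : V, Reach ends o s t ∧ zE (indeg ends o s) < g s ∧
        f t < zE (indeg ends o t) ∧ indeg ends o s + 2 ≤ indeg ends o t := by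
  classical
  set N := Fintype.card V + 2 with hNdef
  have hNV : Fintype.card V < N := by omega
  constructor
  · -- decreasing minimality implies no improving path
    rintro hdm ⟨s, t, hreach, hgs, hft, h2⟩
    obtain ⟨P, hP⟩ := DM.reach_isDipath hreach
    obtain ⟨Q, hQ, _, hnd⟩ := DM.shortcut P s hP
    have hst : s ≠ t := by
      rintro rfl; omega
    set o'' := DM.flipL Q o with ho''
    have hflip := DM.indeg_flipL Q o s hQ hnd
    rw [show DM.flipL Q o = o'' from ho''.symm] at hflip
    have h1 : indeg ends o'' s = indeg ends o s + 1 := by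
      have := hflip s
      rw [if_pos rfl, if_neg (fun hc : t = s => hst hc.symm)] at this
      omega
    have h1t : indeg ends o'' t = indeg ends o t - 1 ∧ 1 ≤ indeg ends o t := by
      have := hflip t
      rw [if_pos rfl, if_neg (fun hc : s = t => hst hc)] at this
      omega
    have h3 : ∀ v, v ≠ s → v ≠ t → indeg ends o'' v = indeg ends o v := by
      intro v hvs hvt
      have := hflip v
      rw [if_neg (fun hc : t = v => hvt hc.symm), if_neg (fun hc : s = v => hvs hc.symm)] at this
      omega
    have hb'' : Bounded ends f g o'' := by
      intro v
      by_cases hvs : v = s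
      · subst hvs
        rw [h1]
        exact ⟨(ho v).1.trans (DM.zE_le_zE (by omega)), DM.lt_succ_le hgs⟩
      · by_cases hvt : v = t
        · subst hvt
          rw [h1t.1]
          exact ⟨DM.lt_pred_le hft, (DM.zE_le_zE (by omega)).trans (ho v).2⟩
        · rw [h3 v hvs hvt]
          exact ho v
    have hmono := hdm o'' hb''
    rw [DM.decSeq_le_iff _ _ hNV] at hmono
    have hlt : (∑ v, N ^ indeg ends o'' v) < ∑ v, N ^ indeg ends o v := by
      refine DM.phi_lt N _ _ s t hst h3 ?_
      rw [h1, h1t.1]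
      have hkey := DM.pow_step_lt (show 2 ≤ N by omega)
        (show indeg ends o s < indeg ends o t - 1 by omega)
      have he : indeg ends o t - 1 + 1 = indeg ends o t := by omega
      rw [he] at hkey
      omega
    omega
  · -- no improving path implies decreasing minimality
    intro hnb o' hbo'
    rw [DM.decSeq_le_iff _ _ hNV]
    have H : ∀ k (o₂ : E → Bool), Bounded ends f g o₂ →
        (Finset.univ.filter fun e => o₂ e ≠ o e).card ≤ k →
        (∑ v, N ^ indeg ends o v) ≤ ∑ v, N ^ indeg ends o₂ v := by
      intro k
      induction k with
      | zero =>
        intro o₂ _ hcard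
        have hall : ∀ e, o₂ e = o e := by
          intro e
          by_contra hc
          have hmem : e ∈ Finset.univ.filter fun e => o₂ e ≠ o e := by
            simp [hc]
          have := Finset.card_pos.2 ⟨e, hmem⟩
          omega
        have : o₂ = o := funext hall
        rw [this]
      | succ k ih =>
        intro o₂ hb₂ hcard
        by_cases hlek : (Finset.univ.filter fun e => o₂ e ≠ o e).card ≤ k
        · exact ih o₂ hb₂ hlek
        push_neg at hlek
        by_cases hind : ∀ v, indeg ends o₂ v = indeg ends o v
        · exact le_of_eq (Finset.sum_congr rfl fun v _ => by rw [hind v]).symm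
        push_neg at hind
        obtain ⟨v₀, hv₀⟩ := hind
        have hex : ∃ s, indeg ends o s < indeg ends o₂ s := by
          by_contra hc
          push_neg at hc
          have hstrict : indeg ends o₂ v₀ < indeg ends o v₀ := lt_of_le_of_ne (hc v₀) hv₀
          have hsum : (∑ v, indeg ends o₂ v) < ∑ v, indeg ends o v :=
            Finset.sum_lt_sum (fun v _ => hc v) ⟨v₀, Finset.mem_univ _, hstrict⟩
          rw [DM.sum_indeg, DM.sum_indeg] at hsum
          omega
        obtain ⟨s, hs⟩ := hex
        have hdec_s := DM.indeg_decomp (ends := ends) (o := o) (o' := o₂) s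
        have hsF : (Finset.univ.filter fun e => o₂ e ≠ o e ∧ ohead ends o e = s).card <
            (Finset.univ.filter fun e => o₂ e ≠ o e ∧ otail ends o e = s).card := by
          omega
        obtain ⟨t, ⟨P, hP, hPF⟩, htc⟩ :=
          DM.reach_excess (ends := ends) (o := o) (fun e => o₂ e ≠ o e) s hsF
        have hdec_t := DM.indeg_decomp (ends := ends) (o := o) (o' := o₂) t
        have ht : indeg ends o₂ t < indeg ends o t := by omega
        have hst : s ≠ t := by
          rintro rfl; omega
        obtain ⟨Q, hQ, hQsub, hnd⟩ := DM.shortcut P s hP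
        have hQF : ∀ e ∈ Q, o₂ e ≠ o e := fun e he => hPF e (hQsub e he)
        have hQneg : ∀ e ∈ Q, o₂ e = !o e := fun e he => DM.bool_neg (hQF e he)
        have hQne : Q ≠ [] := by
          rintro rfl
          exact hst hQ
        have hrev : IsDipath ends o₂ t s Q.reverse := DM.isDipath_reverse hQ hQneg
        have hrnd : (t :: Q.reverse.map (ohead ends o₂)).Nodup := by
          rw [DM.rev_vertex hQ hQneg]
          exact List.nodup_reverse.2 hnd
        set o₃ := DM.flipL Q.reverse o₂ with ho₃
        have hflip := DM.indeg_flipL Q.reverse o₂ t hrev hrnd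
        rw [show DM.flipL Q.reverse o₂ = o₃ from ho₃.symm] at hflip
        have h1 : indeg ends o₃ s + 1 = indeg ends o₂ s := by
          have := hflip s
          rw [if_pos rfl, if_neg (fun hc : t = s => hst hc.symm)] at this
          omega
        have h2 : indeg ends o₃ t = indeg ends o₂ t + 1 := by
          have := hflip t
          rw [if_pos rfl, if_neg (fun hc : s = t => hst hc)] at this
          omega
        have h3 : ∀ v, v ≠ s → v ≠ t → indeg ends o₃ v = indeg ends o₂ v := by
          intro v hvs hvt
          have := hflip v
          rw [if_neg (fun hc : s = v => hvs hc.symm), if_neg (fun hc : t = v => hvt hc.symm)]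
            at this
          omega
        have hreach : Reach ends o s t := DM.isDipath_reach hQ
        have hgs : zE (indeg ends o s) < g s := lt_of_lt_of_le (DM.zE_lt_zE hs) (hb₂ s).2
        have hft : f t < zE (indeg ends o t) := lt_of_le_of_lt (hb₂ t).1 (DM.zE_lt_zE ht)
        have hnb2 : indeg ends o t ≤ indeg ends o s + 1 := by
          by_contra hc
          push_neg at hc
          exact hnb ⟨s, t, hreach, hgs, hft, by omega⟩
        have hb₃ : Bounded ends f g o₃ := by
          intro v
          by_cases hvs : v = s
          · subst hvs
            constructor
            · exact (ho v).1.trans (DM.zE_le_zE (by omega))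
            · exact (DM.zE_le_zE (by omega)).trans (hb₂ v).2
          · by_cases hvt : v = t
            · subst hvt
              constructor
              · exact (hb₂ v).1.trans (DM.zE_le_zE (by omega))
              · exact (DM.zE_le_zE (by omega)).trans (ho v).2
            · rw [h3 v hvs hvt]
              exact hb₂ v
        have hcard₃ : (Finset.univ.filter fun e => o₃ e ≠ o e).card ≤ k := by
          have hssub : (Finset.univ.filter fun e => o₃ e ≠ o e) ⊂
              (Finset.univ.filter fun e => o₂ e ≠ o e) := by
            constructor
            · intro e he
              simp only [Finset.mem_filter, Finset.mem_univ, true_and] at he ⊢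
              by_cases hc : e ∈ Q
              · exfalso
                have : o₃ e = !o₂ e := DM.flipL_mem (List.mem_reverse.2 hc)
                rw [this, hQneg e hc] at he
                simp at he
              · have : o₃ e = o₂ e := DM.flipL_not_mem (fun hc' => hc (List.mem_reverse.1 hc'))
                rw [this] at he
                exact he
            · intro hcsub
              obtain ⟨e₀, he₀⟩ := List.exists_mem_of_ne_nil Q hQne
              have hin : e₀ ∈ Finset.univ.filter fun e => o₂ e ≠ o e := by
                simp only [Finset.mem_filter, Finset.mem_univ, true_and]
                exact hQF e₀ he₀
              have := hcsub hin
              simp only [Finset.mem_filter, Finset.mem_univ, true_and] at this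
              have heq : o₃ e₀ = !o₂ e₀ := DM.flipL_mem (List.mem_reverse.2 he₀)
              rw [heq, hQneg e₀ he₀] at this
              simp at this
          have := Finset.card_lt_card hssub
          omega
        have hΦ := ih o₃ hb₃ hcard₃
        have hkey : N ^ indeg ends o₃ s + N ^ indeg ends o₃ t ≤
            N ^ indeg ends o₂ s + N ^ indeg ends o₂ t := by
          have hple := DM.pow_step_le (show 1 ≤ N by omega)
            (show indeg ends o₂ t ≤ indeg ends o₃ s by omega)
          rw [← h2, h1] at hple
          omega
        have hΦ2 : (∑ v, N ^ indeg ends o₃ v) ≤ ∑ v, N ^ indeg ends o₂ v :=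
          DM.phi_le N _ _ s t hst h3 hkey
        exact hΦ.trans hΦ2
    exact H _ o' hbo' le_rfl
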